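/- Let Ω ⊆ ℝ^n be open, let a_1,…,a_r : Ω → ℝ be nonnegative C² functions, and let w : Ω → ℝ^r be continuous. Suppose that for each j = 1,…,r, Δ log(a_j) ≥ ⟨v_j, w⟩ holds at every point of Ω where a_j > 0. Let ξ : Ω → ℝ^r be a C² function satisfying −Δξ + Σ_{j=1}^r a_j e^{⟨v_j,ξ⟩} v_j = w on Ω. Then at every point of Ω where a_j > 0 for all j = 1,…,r, one has Δ log(Σ_{j=1}^r a_j e^{⟨v_j,ξ⟩}) ≥ ‖Σ_{j=1}^r a_j e^{⟨v_j,ξ⟩} v_j‖² / (Σ_{j=1}^r a_j e^{⟨v_j,ξ⟩}). (Euclidean-domain version of Theorem 1.4.) -/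

import Mathlib

open scoped RealInnerProductSpace

/-- The standard basis `u_1, …, u_r` of `ℝ^r`. -/
noncomputable def stdU {r : ℕ} (j : Fin r) : EuclideanSpace ℝ (Fin r) :=
  EuclideanSpace.single j 1

/-- The vectors `v_j = u_{j+1} - u_j` (`j = 1, …, r-1`), `v_r = u_1 - u_r`. -/
noncomputable def stdV {r : ℕ} (j : Fin r) : EuclideanSpace ℝ (Fin r) :=
  stdU (⟨(j.val + 1) % r, Nat.mod_lt _ j.pos⟩ : Fin r) - stdU j

/-- The Euclidean Laplacian `Δf = Σ_i ∂²f/∂x_i²` (componentwise for vector-valued `f`). -/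
noncomputable def lap {n : ℕ} {F : Type*} [NormedAddCommGroup F] [NormedSpace ℝ F]
    (f : EuclideanSpace ℝ (Fin n) → F) (x : EuclideanSpace ℝ (Fin n)) : F :=
  ∑ i : Fin n, iteratedFDeriv ℝ 2 f x (fun _ => EuclideanSpace.single i 1)

open Filter Topology

private lemma lap_congr_nhds {n : ℕ} {F : Type*} [NormedAddCommGroup F] [NormedSpace ℝ F]
    {f g : EuclideanSpace ℝ (Fin n) → F}
    {x : EuclideanSpace ℝ (Fin n)} (h : f =ᶠ[𝓝 x] g) : lap f x = lap g x := by
  unfold lap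
  refine Finset.sum_congr rfl fun i _ => ?_
  have : iteratedFDeriv ℝ 2 f x = iteratedFDeriv ℝ 2 g x := by
    simp only [← iteratedFDerivWithin_univ]
    exact (h.filter_mono nhdsWithin_le_nhds).iteratedFDerivWithin_eq h.eq_of_nhds 2
  rw [this]

set_option maxHeartbeats 1000000 in
private lemma key_estimate {n r : ℕ} (hr : 0 < r) {U : Set (EuclideanSpace ℝ (Fin n))}
    (hU : IsOpen U) {x : EuclideanSpace ℝ (Fin n)} (hx : x ∈ U)
    (g : Fin r → EuclideanSpace ℝ (Fin n) → ℝ) (hg : ∀ j, ContDiffOn ℝ 2 (g j) U)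
    (c : Fin r → ℝ) (hc : ∀ j, c j ≤ lap (g j) x) :
    (∑ j, Real.exp (g j x) * c j) / (∑ j, Real.exp (g j x))
      ≤ lap (fun y => Real.log (∑ j, Real.exp (g j y))) x := by
  classical
  have hUx : U ∈ 𝓝 x := hU.mem_nhds hx
  have hgat : ∀ j, ∀ y ∈ U, ContDiffAt ℝ 2 (g j) y := fun j y hy =>
    (hg j).contDiffAt (hU.mem_nhds hy)
  have hgd : ∀ j, ∀ y ∈ U, HasFDerivAt (g j) (fderiv ℝ (g j) y) y := fun j y hy =>
    ((hgat j y hy).differentiableAt (by norm_num)).hasFDerivAt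
  set F : EuclideanSpace ℝ (Fin n) → ℝ := fun y => ∑ j, Real.exp (g j y) with hFdef
  have hFpos : ∀ y, 0 < F y :=
    fun y => Finset.sum_pos (fun j _ => Real.exp_pos _) ⟨⟨0, hr⟩, Finset.mem_univ _⟩
  have hFd : ∀ y ∈ U, HasFDerivAt F (∑ j, Real.exp (g j y) • fderiv ℝ (g j) y) y := by
    intro y hy
    exact HasFDerivAt.fun_sum fun j _ => (hgd j y hy).exp
  set Φ : EuclideanSpace ℝ (Fin n) → (EuclideanSpace ℝ (Fin n) →L[ℝ] ℝ) :=
    fun y => (F y)⁻¹ • ∑ j, Real.exp (g j y) • fderiv ℝ (g j) y with hΦdef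
  have hlogd : ∀ y ∈ U, HasFDerivAt (fun z => Real.log (F z)) (Φ y) y := fun y hy =>
    (hFd y hy).log (hFpos y).ne'
  have hfd_eq : fderiv ℝ (fun z => Real.log (F z)) =ᶠ[𝓝 x] Φ :=
    eventually_of_mem hUx fun y hy => (hlogd y hy).fderiv
  -- second derivative data
  set hj : Fin r → ℝ := fun j => Real.exp (g j x) with hhj
  set dg : Fin r → (EuclideanSpace ℝ (Fin n) →L[ℝ] ℝ) := fun j => fderiv ℝ (g j) x with hdg
  set Sg : Fin r → (EuclideanSpace ℝ (Fin n) →L[ℝ]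
      (EuclideanSpace ℝ (Fin n) →L[ℝ] ℝ)) := fun j => fderiv ℝ (fderiv ℝ (g j)) x with hSg
  have hSgd : ∀ j, HasFDerivAt (fun y => fderiv ℝ (g j) y) (Sg j) x := fun j =>
    (((hgat j x hx).fderiv_right (m := 1) (by norm_num)).differentiableAt (by norm_num)).hasFDerivAt
  set F1 : EuclideanSpace ℝ (Fin n) →L[ℝ] ℝ := ∑ j, hj j • dg j with hF1
  set Ψ : EuclideanSpace ℝ (Fin n) →L[ℝ] (EuclideanSpace ℝ (Fin n) →L[ℝ] ℝ) :=
    ∑ j, (hj j • Sg j + (hj j • dg j).smulRight (dg j)) with hΨ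
  have hsum' : HasFDerivAt (fun y => ∑ j, Real.exp (g j y) • fderiv ℝ (g j) y) Ψ x :=
    HasFDerivAt.fun_sum fun j _ => ((hgd j x hx).exp).smul (hSgd j)
  have hinv : HasFDerivAt (fun y => (F y)⁻¹) ((-(F x ^ 2)⁻¹) • F1) x := by
    have := (hasDerivAt_inv (hFpos x).ne').comp_hasFDerivAt x (hFd x hx)
    exact this
  have hΦd : HasFDerivAt Φ ((F x)⁻¹ • Ψ + (((-(F x ^ 2)⁻¹) • F1).smulRight F1)) x := by
    have := hinv.smul hsum'
    exact this
  have h2 : fderiv ℝ (fderiv ℝ (fun z => Real.log (F z))) x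
      = (F x)⁻¹ • Ψ + (((-(F x ^ 2)⁻¹) • F1).smulRight F1) := by
    rw [hfd_eq.fderiv_eq]
    exact hΦd.fderiv
  set e : Fin n → EuclideanSpace ℝ (Fin n) := fun i => EuclideanSpace.single i 1 with he
  have hF1e : ∀ v, F1 v = ∑ j, hj j * dg j v := by
    intro v
    rw [hF1, ContinuousLinearMap.sum_apply]
    simp
  have hΨe : ∀ v, Ψ v v = ∑ j, (hj j * (Sg j v v) + (hj j * dg j v) * dg j v) := by
    intro v
    rw [hΨ, ContinuousLinearMap.sum_apply, ContinuousLinearMap.sum_apply]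
    refine Finset.sum_congr rfl fun j _ => ?_
    simp [ContinuousLinearMap.smulRight_apply]
  have hlap : lap (fun z => Real.log (F z)) x
      = ∑ i, ((F x)⁻¹ * (∑ j, (hj j * (Sg j (e i) (e i)) + (hj j * dg j (e i)) * dg j (e i)))
          + ((-(F x ^ 2)⁻¹) * (∑ j, hj j * dg j (e i))) * (∑ j, hj j * dg j (e i))) := by
    unfold lap
    refine Finset.sum_congr rfl fun i _ => ?_
    rw [iteratedFDeriv_two_apply, h2]
    simp only [ContinuousLinearMap.add_apply, ContinuousLinearMap.smul_apply,
      ContinuousLinearMap.smulRight_apply, smul_eq_mul]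
    rw [hΨe, hF1e]
  have hlapg : ∀ j, lap (g j) x = ∑ i, Sg j (e i) (e i) := by
    intro j
    unfold lap
    exact Finset.sum_congr rfl fun i _ => by rw [iteratedFDeriv_two_apply]
  have hgoal : (∑ j, Real.exp (g j x) * c j) / (∑ j, Real.exp (g j x))
      = (∑ j, Real.exp (g j x) * c j) / F x := rfl
  have hgoal2 : lap (fun y => Real.log (∑ j, Real.exp (g j y))) x
      = lap (fun z => Real.log (F z)) x := rfl
  rw [hgoal, hgoal2, hlap]
  have hFx := hFpos x
  have hFxsum : F x = ∑ j, hj j := rfl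
  have main : (∑ j, Real.exp (g j x) * c j) / F x
      ≤ ∑ i, (F x)⁻¹ * (∑ j, hj j * Sg j (e i) (e i)) := by
    have h1 : (∑ j, Real.exp (g j x) * c j) ≤ ∑ j, hj j * lap (g j) x :=
      Finset.sum_le_sum fun j _ => mul_le_mul_of_nonneg_left (hc j) (Real.exp_pos _).le
    have h2' : ∑ i, (F x)⁻¹ * (∑ j, hj j * Sg j (e i) (e i))
        = (F x)⁻¹ * ∑ j, hj j * lap (g j) x := by
      rw [← Finset.mul_sum, Finset.sum_comm]
      congr 1
      refine Finset.sum_congr rfl fun j _ => ?_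
      rw [hlapg j, Finset.mul_sum]
    rw [h2', div_eq_inv_mul]
    exact mul_le_mul_of_nonneg_left h1 (inv_pos.mpr hFx).le
  refine main.trans (Finset.sum_le_sum fun i _ => ?_)
  set D := ∑ j, hj j * dg j (e i) with hD
  set Q := ∑ j, hj j * (dg j (e i)) ^ 2 with hQ
  have hCS : D ^ 2 ≤ F x * Q := by
    rw [hFxsum]
    exact Finset.sum_sq_le_sum_mul_sum_of_sq_eq_mul Finset.univ
      (fun j _ => (Real.exp_pos _).le)
      (fun j _ => mul_nonneg (Real.exp_pos _).le (sq_nonneg _))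
      (fun j _ => by ring)
  have hexpand : ∑ j, (hj j * (Sg j (e i) (e i)) + (hj j * dg j (e i)) * dg j (e i))
      = (∑ j, hj j * Sg j (e i) (e i)) + Q := by
    rw [hQ, ← Finset.sum_add_distrib]
    exact Finset.sum_congr rfl fun j _ => by ring
  rw [hexpand]
  have hkey2 : (F x ^ 2)⁻¹ * D ^ 2 ≤ (F x)⁻¹ * Q := by
    have h3 : (F x ^ 2)⁻¹ * D ^ 2 ≤ (F x ^ 2)⁻¹ * (F x * Q) :=
      mul_le_mul_of_nonneg_left hCS (inv_nonneg.mpr (sq_nonneg _))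
    have h4 : (F x ^ 2)⁻¹ * (F x * Q) = (F x)⁻¹ * Q := by
      rw [sq, mul_inv]
      field_simp
    linarith
  have hexp1 : ((-(F x ^ 2)⁻¹) * D) * D = -((F x ^ 2)⁻¹ * D ^ 2) := by ring
  have hexp2 : (F x)⁻¹ * ((∑ j, hj j * Sg j (e i) (e i)) + Q)
      = (F x)⁻¹ * (∑ j, hj j * Sg j (e i) (e i)) + (F x)⁻¹ * Q := by ring
  rw [hexp1, hexp2]
  linarith

set_option maxHeartbeats 1000000 in
theorem energy_density_estimate (n r : ℕ) (hr : 2 ≤ r)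
    (Ω : Set (EuclideanSpace ℝ (Fin n))) (hΩ : IsOpen Ω)
    (a : Fin r → EuclideanSpace ℝ (Fin n) → ℝ)
    (ha_C2 : ∀ j, ContDiffOn ℝ 2 (a j) Ω) (ha_nonneg : ∀ j, ∀ x ∈ Ω, 0 ≤ a j x)
    (w : EuclideanSpace ℝ (Fin n) → EuclideanSpace ℝ (Fin r)) (hw : ContinuousOn w Ω)
    (ha_sub : ∀ j : Fin r, ∀ x ∈ Ω, 0 < a j x →
      ⟪stdV j, w x⟫ ≤ lap (fun y => Real.log (a j y)) x)
    (ξ : EuclideanSpace ℝ (Fin n) → EuclideanSpace ℝ (Fin r))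
    (hξ : ContDiffOn ℝ 2 ξ Ω)
    (heq : ∀ x ∈ Ω, -lap ξ x + ∑ j : Fin r, (a j x * Real.exp ⟪stdV j, ξ x⟫) • stdV j = w x) :
    ∀ x ∈ Ω, (∀ j : Fin r, 0 < a j x) →
      ‖∑ j : Fin r, (a j x * Real.exp ⟪stdV j, ξ x⟫) • stdV j‖ ^ 2
          / (∑ j : Fin r, a j x * Real.exp ⟪stdV j, ξ x⟫)
        ≤ lap (fun y => Real.log (∑ j : Fin r, a j y * Real.exp ⟪stdV j, ξ y⟫)) x := by
  intro x hxΩ hax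
  classical
  set U : Set (EuclideanSpace ℝ (Fin n)) := ⋂ j : Fin r, (Ω ∩ (a j) ⁻¹' Set.Ioi 0) with hUdef
  have hUopen : IsOpen U := isOpen_iInter_of_finite fun j =>
    (ha_C2 j).continuousOn.isOpen_inter_preimage hΩ isOpen_Ioi
  have hxU : x ∈ U := Set.mem_iInter.2 fun j => ⟨hxΩ, hax j⟩
  have hUΩ : U ⊆ Ω := fun y hy =>
    (Set.mem_iInter.1 hy ⟨0, by omega⟩).1
  have haU : ∀ j, ∀ y ∈ U, 0 < a j y := fun j y hy => (Set.mem_iInter.1 hy j).2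
  set g : Fin r → EuclideanSpace ℝ (Fin n) → ℝ :=
    fun j y => Real.log (a j y) + ⟪stdV j, ξ y⟫ with hgdef
  have hinnerC2 : ∀ j, ContDiffOn ℝ 2 (fun y => (⟪stdV j, ξ y⟫ : ℝ)) U := by
    intro j
    have := (innerSL ℝ (stdV j)).contDiff.comp_contDiffOn (hξ.mono hUΩ)
    simpa [Function.comp_def] using this
  have hgC2 : ∀ j, ContDiffOn ℝ 2 (g j) U := by
    intro j
    exact (((ha_C2 j).mono hUΩ).log fun y hy => (haU j y hy).ne').add (hinnerC2 j)
  -- additivity of the Laplacian for g j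
  have hlapg : ∀ j, lap (g j) x = lap (fun y => Real.log (a j y)) x + ⟪stdV j, lap ξ x⟫ := by
    intro j
    have hud : UniqueDiffOn ℝ U := hUopen.uniqueDiffOn
    have hlog : ContDiffOn ℝ 2 (fun y => Real.log (a j y)) U :=
      ((ha_C2 j).mono hUΩ).log fun y hy => (haU j y hy).ne'
    have key : lap (fun y => Real.log (a j y) + ⟪stdV j, ξ y⟫) x
        = lap (fun y => Real.log (a j y)) x + ⟪stdV j, lap ξ x⟫ := by
      unfold lap
      rw [inner_sum, ← Finset.sum_add_distrib]
      refine Finset.sum_congr rfl fun i _ => ?_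
      have hfun : (fun y => (⟪stdV j, ξ y⟫ : ℝ)) = (innerSL ℝ (stdV j)) ∘ ξ := by
        funext y; simp
      have hcomp : iteratedFDerivWithin ℝ 2 ((innerSL ℝ (stdV j)) ∘ ξ) U x
          = (innerSL ℝ (stdV j)).compContinuousMultilinearMap
              (iteratedFDerivWithin ℝ 2 ξ U x) :=
        (innerSL ℝ (stdV j)).iteratedFDerivWithin_comp_left (hξ.mono hUΩ x hxU) hud hxU le_rfl
      calc iteratedFDeriv ℝ 2 (fun y => Real.log (a j y) + ⟪stdV j, ξ y⟫) x
              (fun _ => EuclideanSpace.single i 1)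
          = iteratedFDerivWithin ℝ 2 (fun y => Real.log (a j y) + ⟪stdV j, ξ y⟫) U x
              (fun _ => EuclideanSpace.single i 1) := by
            rw [iteratedFDerivWithin_of_isOpen 2 hUopen hxU]
        _ = iteratedFDerivWithin ℝ 2 (fun y => Real.log (a j y)) U x
              (fun _ => EuclideanSpace.single i 1)
            + iteratedFDerivWithin ℝ 2 (fun y => (⟪stdV j, ξ y⟫ : ℝ)) U x
              (fun _ => EuclideanSpace.single i 1) := by
            rw [iteratedFDerivWithin_add_apply' (hlog x hxU) (hinnerC2 j x hxU) hud hxU]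
            rfl
        _ = iteratedFDeriv ℝ 2 (fun y => Real.log (a j y)) x
              (fun _ => EuclideanSpace.single i 1)
            + ⟪stdV j, iteratedFDeriv ℝ 2 ξ x (fun _ => EuclideanSpace.single i 1)⟫ := by
            rw [iteratedFDerivWithin_of_isOpen 2 hUopen hxU, hfun, hcomp]
            simp only [ContinuousLinearMap.compContinuousMultilinearMap_coe,
              Function.comp_apply, innerSL_apply_apply]
            rw [iteratedFDerivWithin_of_isOpen 2 hUopen hxU]
    exact key
  set V := ∑ j : Fin r, (a j x * Real.exp ⟪stdV j, ξ x⟫) • stdV j with hV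
  set c : Fin r → ℝ := fun j => ⟪stdV j, V⟫ with hc
  have hcj : ∀ j, c j ≤ lap (g j) x := by
    intro j
    have h1 := ha_sub j x hxΩ (hax j)
    have h2 : c j = ⟪stdV j, w x⟫ + ⟪stdV j, lap ξ x⟫ := by
      rw [← heq x hxΩ]
      rw [inner_add_right, inner_neg_right]
      ring
    rw [h2, hlapg j]
    linarith
  have hkey := key_estimate (by omega) hUopen hxU g hgC2 c hcj
  have hexp : ∀ j, Real.exp (g j x) = a j x * Real.exp ⟪stdV j, ξ x⟫ := fun j => by
    simp [hgdef, Real.exp_add, Real.exp_log (hax j)]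
  have hnum : ∑ j, Real.exp (g j x) * c j = ‖V‖ ^ 2 := by
    simp_rw [hexp]
    rw [← real_inner_self_eq_norm_sq, hV, sum_inner]
    exact Finset.sum_congr rfl fun j _ => by rw [real_inner_smul_left]
  have hden : ∑ j, Real.exp (g j x) = ∑ j, a j x * Real.exp ⟪stdV j, ξ x⟫ :=
    Finset.sum_congr rfl fun j _ => hexp j
  have hlapeq : lap (fun y => Real.log (∑ j, Real.exp (g j y))) x
      = lap (fun y => Real.log (∑ j : Fin r, a j y * Real.exp ⟪stdV j, ξ y⟫)) x := by
    refine lap_congr_nhds (eventually_of_mem (hUopen.mem_nhds hxU) fun y hy => ?_)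
    show Real.log (∑ j, Real.exp (g j y)) = Real.log (∑ j : Fin r, a j y * Real.exp ⟪stdV j, ξ y⟫)
    congr 1
    exact Finset.sum_congr rfl fun j _ => by
      simp [hgdef, Real.exp_add, Real.exp_log (haU j y hy)]
  rw [hnum, hden, hlapeq] at hkey
  exact hkey
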